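/- Let L₁, L₂ be closed subspaces of a real Hilbert space H and T = P₂ ∘ P₁ the composition of the orthogonal projections. For every x₀ ∈ Y = L₁^⊥ + L₂^⊥ there is a constant C(x₀) (one may take C(x₀) = s(P₁ x₀), where s is the decomposition norm on Y) such that ‖Tⁿ x₀‖ ≤ C(x₀) / √(2n - 1) for all n ≥ 1. -/

import Mathlib

open Finset RealInnerProductSpace

/-- The decomposition norm `s(y) = inf { ‖y₁‖ + ‖y₂‖ : y = y₁ + y₂, yⱼ ∈ Lⱼ^⊥ }`. -/
noncomputable def decompNorm2 {H : Type*} [NormedAddCommGroup H] [InnerProductSpace ℝ H]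
    (L₁ L₂ : Submodule ℝ H) (y : H) : ℝ :=
  sInf {r : ℝ | ∃ y₁ y₂ : H, y₁ ∈ L₁ᗮ ∧ y₂ ∈ L₂ᗮ ∧ y = y₁ + y₂ ∧ r = ‖y₁‖ + ‖y₂‖}

section Aux

variable {H : Type*} [NormedAddCommGroup H] [InnerProductSpace ℝ H]
  (L₁ L₂ : Submodule ℝ H) [CompleteSpace L₁] [CompleteSpace L₂]

/-- The operator `A = P₁ ∘ P₂` (as a plain function). -/
noncomputable def altA (y : H) : H :=
  (Submodule.orthogonalProjection L₁ ((Submodule.orthogonalProjection L₂ y : H)) : H)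

set_option maxHeartbeats 1000000 in
lemma key_bound (u z₁ z₂ : H) (hu : u ∈ L₁) (hz₁ : z₁ ∈ L₁ᗮ) (hz₂ : z₂ ∈ L₂ᗮ)
    (huz : u = z₁ + z₂) (k : ℕ) :
    ‖(Submodule.orthogonalProjection L₂ ((altA L₁ L₂)^[k] u) : H)‖ * Real.sqrt (2 * (k : ℝ) + 1)
      ≤ ‖z₁‖ + ‖z₂‖ := by
  set Q1 : H → H := fun y => (Submodule.orthogonalProjection L₁ y : H) with hQ1def
  set Q2 : H → H := fun y => (Submodule.orthogonalProjection L₂ y : H) with hQ2def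
  have hAdef : ∀ y : H, altA L₁ L₂ y = Q1 (Q2 y) := fun y => rfl
  have h1mem : ∀ y : H, Q1 y ∈ L₁ := fun y => (Submodule.orthogonalProjection L₁ y).2
  have h2mem : ∀ y : H, Q2 y ∈ L₂ := fun y => (Submodule.orthogonalProjection L₂ y).2
  have h1fix : ∀ y : H, y ∈ L₁ → Q1 y = y := fun y hy =>
    Submodule.starProjection_eq_self_iff.mpr hy
  have hsa1 : ∀ x y : H, ⟪Q1 x, y⟫ = ⟪x, Q1 y⟫ := fun x y =>
    Submodule.inner_starProjection_left_eq_right L₁ x y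
  have hsa2 : ∀ x y : H, ⟪Q2 x, y⟫ = ⟪x, Q2 y⟫ := fun x y =>
    Submodule.inner_starProjection_left_eq_right L₂ x y
  have hproj2 : ∀ x : H, ⟪Q2 x, x⟫ = ‖Q2 x‖ ^ 2 := by
    intro x
    have h0 : ⟪x - Q2 x, Q2 x⟫ = 0 :=
      Submodule.starProjection_inner_eq_zero x (Q2 x) (h2mem x)
    have := real_inner_self_eq_norm_sq (Q2 x)
    rw [inner_sub_left] at h0
    rw [real_inner_comm]
    linarith
  have hcontr1 : ∀ x : H, ‖Q1 x‖ ≤ ‖x‖ := by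
    intro x
    have h0 : ⟪x - Q1 x, Q1 x⟫ = 0 :=
      Submodule.starProjection_inner_eq_zero x (Q1 x) (h1mem x)
    rw [inner_sub_left] at h0
    have h1 := real_inner_le_norm x (Q1 x)
    have h2 := real_inner_self_eq_norm_sq (Q1 x)
    nlinarith [norm_nonneg (Q1 x), norm_nonneg x]
  have hcontr2 : ∀ x : H, ‖Q2 x‖ ≤ ‖x‖ := by
    intro x
    have h1 := real_inner_le_norm (Q2 x) x
    have h2 := hproj2 x
    nlinarith [norm_nonneg (Q2 x), norm_nonneg x]
  -- iterates of A stay in L₁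
  have hmem : ∀ j : ℕ, (altA L₁ L₂)^[j] u ∈ L₁ := by
    intro j
    induction j with
    | zero => simpa using hu
    | succ j _ =>
      rw [Function.iterate_succ_apply', hAdef]
      exact h1mem _
  -- self-adjointness of A on L₁
  have hAsa : ∀ x : H, x ∈ L₁ → ∀ y : H, y ∈ L₁ →
      ⟪altA L₁ L₂ x, y⟫ = ⟪x, altA L₁ L₂ y⟫ := by
    intro x hx y hy
    rw [hAdef, hAdef, hsa1, h1fix y hy, hsa2, ← hsa1, h1fix x hx]
  set m : ℕ → ℝ := fun s => ⟪(altA L₁ L₂)^[s] u, u⟫ with hmdef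
  have hminner : ∀ i j : ℕ, ⟪(altA L₁ L₂)^[i] u, (altA L₁ L₂)^[j] u⟫ = m (i + j) := by
    intro i
    induction i with
    | zero =>
      intro j
      simp only [Function.iterate_zero, id_eq, Nat.zero_add, hmdef]
      exact real_inner_comm _ _
    | succ i ih =>
      intro j
      rw [Function.iterate_succ_apply', hAsa _ (hmem i) _ (hmem j),
        ← Function.iterate_succ_apply' (altA L₁ L₂) j u, ih (j + 1)]
      congr 1
      omega
  have hAm : ∀ i j : ℕ, ⟪Q2 ((altA L₁ L₂)^[i] u), (altA L₁ L₂)^[j] u⟫ = m (i + j + 1) := by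
    intro i j
    have : ⟪Q2 ((altA L₁ L₂)^[i] u), (altA L₁ L₂)^[j] u⟫
        = ⟪altA L₁ L₂ ((altA L₁ L₂)^[i] u), (altA L₁ L₂)^[j] u⟫ := by
      rw [hAdef, hsa1, h1fix _ (hmem j)]
    rw [this, ← Function.iterate_succ_apply' (altA L₁ L₂) i u, hminner (i + 1) j]
    congr 1
    omega
  have hodd : ∀ j : ℕ, m (2 * j + 1) = ‖Q2 ((altA L₁ L₂)^[j] u)‖ ^ 2 := by
    intro j
    have h1 := hAm j j
    have h2 : ⟪Q2 ((altA L₁ L₂)^[j] u), (altA L₁ L₂)^[j] u⟫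
        = ‖Q2 ((altA L₁ L₂)^[j] u)‖ ^ 2 := by
      rw [← hproj2 ((altA L₁ L₂)^[j] u)]
    rw [← h2, h1]
    congr 1
    omega
  have heven : ∀ j : ℕ, m (2 * j) = ‖(altA L₁ L₂)^[j] u‖ ^ 2 := by
    intro j
    have h1 := hminner j j
    rw [real_inner_self_eq_norm_sq] at h1
    rw [show 2 * j = j + j from by omega]
    exact h1.symm
  have hm0 : ∀ s : ℕ, 0 ≤ m s := by
    intro s
    rcases Nat.even_or_odd s with ⟨j, hj⟩ | ⟨j, hj⟩
    · have : s = 2 * j := by omega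
      rw [this, heven]
      positivity
    · rw [hj, hodd]
      positivity
  have hmono : ∀ s : ℕ, m (s + 1) ≤ m s := by
    intro s
    rcases Nat.even_or_odd s with ⟨j, hj⟩ | ⟨j, hj⟩
    · have hs : s = 2 * j := by omega
      rw [hs, hodd, heven]
      exact pow_le_pow_left₀ (norm_nonneg _) (hcontr2 _) 2
    · rw [hj, show 2 * j + 1 + 1 = 2 * (j + 1) from by omega, hodd, heven]
      rw [Function.iterate_succ_apply', hAdef]
      exact pow_le_pow_left₀ (norm_nonneg _) (hcontr1 _) 2
  have hanti : Antitone m := antitone_nat_of_succ_le hmono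
  -- the key summation estimate
  set K : ℕ := 2 * k + 1 with hKdef
  set w : H := ∑ j ∈ Finset.range (K + 1), (altA L₁ L₂)^[j] u with hwdef
  set S : ℝ := ∑ j ∈ Finset.range (K + 1), m j with hSdef
  have hwmem : w ∈ L₁ := Submodule.sum_mem _ fun j _ => hmem j
  have hwu : ⟪w, u⟫ = S := by
    rw [hwdef, sum_inner]
  have hSnn : 0 ≤ S := Finset.sum_nonneg fun j _ => hm0 j
  have hSz : S = ⟪w - Q2 w, z₂⟫ := by
    have h1 : ⟪w, z₁⟫ = 0 := Submodule.inner_right_of_mem_orthogonal hwmem hz₁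
    have h2 : ⟪Q2 w, z₂⟫ = 0 := Submodule.inner_right_of_mem_orthogonal (h2mem w) hz₂
    rw [inner_sub_left, h2, sub_zero, ← hwu, huz, inner_add_right, h1, zero_add]
  have hcs : S ≤ ‖w - Q2 w‖ * ‖z₂‖ := hSz ▸ real_inner_le_norm _ _
  have hressq : ‖w - Q2 w‖ ^ 2 = ⟪w, w⟫ - ⟪Q2 w, w⟫ := by
    have h0 : ⟪w - Q2 w, Q2 w⟫ = 0 :=
      Submodule.starProjection_inner_eq_zero w (Q2 w) (h2mem w)
    have h1 : ⟪w - Q2 w, w - Q2 w⟫ = ‖w - Q2 w‖ ^ 2 := real_inner_self_eq_norm_sq _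
    rw [inner_sub_right, h0, sub_zero, inner_sub_left] at h1
    linarith
  have hww : ⟪w, w⟫ = ∑ i ∈ Finset.range (K + 1), ∑ j ∈ Finset.range (K + 1), m (i + j) := by
    rw [hwdef, sum_inner]
    refine Finset.sum_congr rfl fun i _ => ?_
    rw [inner_sum]
    exact Finset.sum_congr rfl fun j _ => hminner i j
  have hQ2ww : ⟪Q2 w, w⟫
      = ∑ i ∈ Finset.range (K + 1), ∑ j ∈ Finset.range (K + 1), m (i + j + 1) := by
    rw [Finset.sum_comm]
    conv_lhs => rw [hwdef]
    rw [inner_sum]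
    refine Finset.sum_congr rfl fun j _ => ?_
    rw [hsa2, sum_inner]
    refine Finset.sum_congr rfl fun i _ => ?_
    rw [← hsa2]
    exact hAm i j
  have hD : ⟪w, w⟫ - ⟪Q2 w, w⟫ ≤ S := by
    rw [hww, hQ2ww, ← Finset.sum_sub_distrib]
    have : ∀ i ∈ Finset.range (K + 1),
        (∑ j ∈ Finset.range (K + 1), m (i + j)) - ∑ j ∈ Finset.range (K + 1), m (i + j + 1)
          ≤ m i := by
      intro i _
      rw [← Finset.sum_sub_distrib]
      have htel : ∑ j ∈ Finset.range (K + 1), (m (i + j) - m (i + (j + 1)))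
          = m (i + 0) - m (i + (K + 1)) := Finset.sum_range_sub' (fun j => m (i + j)) (K + 1)
      calc (∑ j ∈ Finset.range (K + 1), (m (i + j) - m (i + j + 1)))
          = m (i + 0) - m (i + (K + 1)) := htel
        _ ≤ m i := by
            have := hm0 (i + (K + 1))
            simp only [Nat.add_zero]
            linarith
    calc ∑ i ∈ Finset.range (K + 1),
          ((∑ j ∈ Finset.range (K + 1), m (i + j)) - ∑ j ∈ Finset.range (K + 1), m (i + j + 1))
        ≤ ∑ i ∈ Finset.range (K + 1), m i := Finset.sum_le_sum this
      _ = S := rfl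
  have hS2 : S ^ 2 ≤ S * ‖z₂‖ ^ 2 := by
    have h1 : ‖w - Q2 w‖ ^ 2 ≤ S := by rw [hressq]; exact hD
    nlinarith [norm_nonneg (w - Q2 w), norm_nonneg z₂]
  have hKm : ((K : ℝ) + 1) * m K ≤ S := by
    have h1 : (K + 1) • m K ≤ S := by
      have := Finset.card_nsmul_le_sum (Finset.range (K + 1)) m (m K)
        (fun j hj => hanti (Nat.lt_succ_iff.mp (Finset.mem_range.mp hj)))
      simpa using this
    have h2 : (K + 1) • m K = ((K : ℝ) + 1) * m K := by
      rw [nsmul_eq_mul]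
      push_cast
      ring
    linarith [h2 ▸ h1]
  have hfin : ((K : ℝ) + 1) * m K ≤ ‖z₂‖ ^ 2 := by
    rcases hSnn.eq_or_lt with h | h
    · have : ((K : ℝ) + 1) * m K ≤ 0 := by rw [← h] at hKm; linarith
      nlinarith [norm_nonneg z₂]
    · have hSle : S ≤ ‖z₂‖ ^ 2 := by nlinarith
      linarith
  -- conclude
  have hmK : m K = ‖(Submodule.orthogonalProjection L₂ ((altA L₁ L₂)^[k] u) : H)‖ ^ 2 := hodd k
  set a : ℝ := ‖(Submodule.orthogonalProjection L₂ ((altA L₁ L₂)^[k] u) : H)‖ with hadef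
  have ha0 : 0 ≤ a := norm_nonneg _
  have hKcast : ((K : ℝ) + 1) = 2 * (k : ℝ) + 2 := by rw [hKdef]; push_cast; ring
  have ht0 : (0 : ℝ) ≤ 2 * (k : ℝ) + 1 := by positivity
  have hsq : (a * Real.sqrt (2 * (k : ℝ) + 1)) ^ 2 ≤ (‖z₁‖ + ‖z₂‖) ^ 2 := by
    rw [mul_pow, Real.sq_sqrt ht0]
    have h1 : a ^ 2 * (2 * (k : ℝ) + 2) ≤ ‖z₂‖ ^ 2 := by
      rw [← hKcast, ← hmK]; linarith [hfin]
    nlinarith [norm_nonneg z₁, norm_nonneg z₂, sq_nonneg a]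
  calc a * Real.sqrt (2 * (k : ℝ) + 1)
      = Real.sqrt ((a * Real.sqrt (2 * (k : ℝ) + 1)) ^ 2) :=
        (Real.sqrt_sq (by positivity)).symm
    _ ≤ Real.sqrt ((‖z₁‖ + ‖z₂‖) ^ 2) := Real.sqrt_le_sqrt hsq
    _ = ‖z₁‖ + ‖z₂‖ := Real.sqrt_sq (by positivity)

end Aux

theorem alternating_projections_two_subspaces_rate
    {H : Type*} [NormedAddCommGroup H] [InnerProductSpace ℝ H] [CompleteSpace H]
    (L₁ L₂ : Submodule ℝ H)
    (h₁ : IsClosed ((L₁ : Set H))) (h₂ : IsClosed ((L₂ : Set H)))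
    [CompleteSpace L₁] [CompleteSpace L₂]
    (x₀ : H) (hx₀ : ∃ y₁ y₂ : H, y₁ ∈ L₁ᗮ ∧ y₂ ∈ L₂ᗮ ∧ x₀ = y₁ + y₂) :
    ∃ C : ℝ, C = decompNorm2 L₁ L₂ (Submodule.orthogonalProjection L₁ x₀ : H) ∧
      ∀ n : ℕ, 1 ≤ n →
        ‖(fun y : H => (Submodule.orthogonalProjection L₂
            ((Submodule.orthogonalProjection L₁ y : H)) : H))^[n] x₀‖ ≤
          C / Real.sqrt (2 * (n : ℝ) - 1) := by
  classical
  set u : H := (Submodule.orthogonalProjection L₁ x₀ : H) with hudef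
  refine ⟨decompNorm2 L₁ L₂ u, rfl, ?_⟩
  intro n hn
  obtain ⟨k, rfl⟩ : ∃ k, n = k + 1 := ⟨n - 1, by omega⟩
  have hu : u ∈ L₁ := (Submodule.orthogonalProjection L₁ x₀).2
  -- the iterate identity
  have hiter : ∀ j : ℕ,
      (fun y : H => (Submodule.orthogonalProjection L₂ ((Submodule.orthogonalProjection L₁ y : H)) : H))^[j + 1] x₀
        = (Submodule.orthogonalProjection L₂ ((altA L₁ L₂)^[j] u) : H) := by
    intro j
    induction j with
    | zero => simp [altA, hudef]
    | succ j ih =>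
      rw [show j + 1 + 1 = (j + 1) + 1 from rfl, Function.iterate_succ_apply', ih]
      have : (altA L₁ L₂)^[j + 1] u = altA L₁ L₂ ((altA L₁ L₂)^[j] u) :=
        Function.iterate_succ_apply' _ _ _
      rw [this]
      rfl
  -- nonemptiness of the decomposition set for u
  obtain ⟨y₁, y₂, hy₁, hy₂, hxy⟩ := hx₀
  have hQy₁ : (Submodule.orthogonalProjection L₁ y₁ : H) = 0 := by
    rw [Submodule.orthogonalProjectionOnto_apply_of_mem_orthogonal hy₁]
    rfl
  have huy : u = (Submodule.orthogonalProjection L₁ y₂ : H) := by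
    rw [hudef, hxy, map_add]
    push_cast
    rw [hQy₁, zero_add]
  have hmem1 : u - y₂ ∈ L₁ᗮ := by
    rw [huy]
    have := Submodule.sub_starProjection_mem_orthogonal (K := L₁) y₂
    have h' := L₁ᗮ.neg_mem this
    rwa [neg_sub] at h'
  have hne : ∃ r : ℝ, r ∈ {r : ℝ | ∃ z₁ z₂ : H, z₁ ∈ L₁ᗮ ∧ z₂ ∈ L₂ᗮ ∧ u = z₁ + z₂ ∧
      r = ‖z₁‖ + ‖z₂‖} :=
    ⟨‖u - y₂‖ + ‖y₂‖, u - y₂, y₂, hmem1, hy₂, (sub_add_cancel u y₂).symm, rfl⟩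
  -- positivity of the square root
  have hcast : 2 * ((k + 1 : ℕ) : ℝ) - 1 = 2 * (k : ℝ) + 1 := by push_cast; ring
  have hpos : 0 < Real.sqrt (2 * ((k + 1 : ℕ) : ℝ) - 1) := by
    rw [hcast]
    exact Real.sqrt_pos.mpr (by positivity)
  rw [le_div_iff₀ hpos, hiter k]
  have hbound : ∀ r ∈ {r : ℝ | ∃ z₁ z₂ : H, z₁ ∈ L₁ᗮ ∧ z₂ ∈ L₂ᗮ ∧ u = z₁ + z₂ ∧
      r = ‖z₁‖ + ‖z₂‖},
      ‖(Submodule.orthogonalProjection L₂ ((altA L₁ L₂)^[k] u) : H)‖ *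
        Real.sqrt (2 * ((k + 1 : ℕ) : ℝ) - 1) ≤ r := by
    rintro r ⟨z₁, z₂, hz₁, hz₂, huz, rfl⟩
    rw [hcast]
    exact key_bound L₁ L₂ u z₁ z₂ hu hz₁ hz₂ huz k
  exact le_csInf hne hbound
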